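/- Let f:[0,1]→[0,1] be a unimodal map symmetric about its critical point c, let q be the orientation-reversing fixed point of f, let I^1 = (q̂, q), and let {I^k} be the principal nest starting from I^1. Let S_k denote the Fibonacci numbers S_0 = 1, S_1 = 2, S_{k+1} = S_k + S_{k−1}. Suppose that for every k ≥ 1: (1) I^k ∩ D(I^k) has exactly two connected components intersecting orb^+(c), denoted I_0^k and I_1^k with c ∈ I_0^k; (2) R_{I^k}|_{I_0^k} = f^{S_{k+1}} and R_{I^k}|_{I_1^k} = f^{S_k}; and (3) f^{S_k}(c) ∉ I^k. Then f is a Fibonacci map. -/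
import Mathlib


noncomputable section

/-- The Fibonacci numbers `S 0 = 1`, `S 1 = 2`, `S (k+2) = S (k+1) + S k`. -/
def fibS : ℕ → ℕ
  | 0 => 1
  | 1 => 2
  | n + 2 => fibS (n + 1) + fibS n

/-- `f : [0,1] → [0,1]` is unimodal with critical point `c`: continuous, maps `[0,1]` into
itself, `f 0 = f 1 = 0`, `c ∈ (0,1)`, strictly increasing on `[0,c]`, strictly decreasing
on `[c,1]`. -/
def IsUnimodal (f : ℝ → ℝ) (c : ℝ) : Prop :=
  ContinuousOn f (Set.Icc 0 1) ∧ Set.MapsTo f (Set.Icc 0 1) (Set.Icc 0 1) ∧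
  f 0 = 0 ∧ f 1 = 0 ∧ c ∈ Set.Ioo (0 : ℝ) 1 ∧
  StrictMonoOn f (Set.Icc 0 c) ∧ StrictAntiOn f (Set.Icc c 1)

/-- `f` is symmetric about `c`: `f (2c - x) = f x` whenever both points lie in `[0,1]`
(the symmetric point of `x` is `x̂ = 2c - x`). -/
def SymmetricAbout (f : ℝ → ℝ) (c : ℝ) : Prop :=
  ∀ x ∈ Set.Icc (0 : ℝ) 1, 2 * c - x ∈ Set.Icc (0 : ℝ) 1 → f (2 * c - x) = f x

/-- The distance from `c` to a nearest `k`-th preimage `c₋ₖ` of `c` in `[0,1]`,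
i.e. `|c₋ₖ - c| = |c₋ₖ|`. -/
def preimDist (f : ℝ → ℝ) (c : ℝ) (k : ℕ) : ℝ :=
  sInf ((fun x => |x - c|) '' {x | x ∈ Set.Icc (0 : ℝ) 1 ∧ f^[k] x = c})

/-- `S` is the sequence of cutting times of `f`: `S 0 = 1`, and `S (i+1)` is the least
`k ≥ S i` for which the nearest `k`-th preimage `c₋ₖ` of `c` lies in the symmetric open
interval `(c₋ₛᵢ, (c₋ₛᵢ)^)`, i.e. `c₋ₖ` exists and is strictly closer to `c` than `c₋ₛᵢ`. -/
def IsCuttingSeq (f : ℝ → ℝ) (c : ℝ) (S : ℕ → ℕ) : Prop :=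
  S 0 = 1 ∧ ∀ i, IsLeast {k | S i ≤ k ∧
    ({x | x ∈ Set.Icc (0 : ℝ) 1 ∧ f^[k] x = c}).Nonempty ∧
    preimDist f c k < preimDist f c (S i)} (S (i + 1))

/-- A Fibonacci map: a symmetric unimodal map whose cutting times are exactly the
Fibonacci numbers `1, 2, 3, 5, 8, …`. -/
def IsFibonacciMap (f : ℝ → ℝ) (c : ℝ) : Prop :=
  IsUnimodal f c ∧ SymmetricAbout f c ∧ IsCuttingSeq f c fibS

/-- The entry domain `D(J) = {x : f^k x ∈ J for some k ≥ 1}`. -/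
def entryDom (f : ℝ → ℝ) (J : Set ℝ) : Set ℝ := {x | ∃ k, 1 ≤ k ∧ f^[k] x ∈ J}

/-- The first return time of `x` to `J` equals `m`: `f^[m] x ∈ J` and no earlier positive
iterate of `x` lies in `J`; thus the first return map satisfies `R_J x = f^[m] x`. -/
def ReturnTimeEq (f : ℝ → ℝ) (J : Set ℝ) (x : ℝ) (m : ℕ) : Prop :=
  1 ≤ m ∧ f^[m] x ∈ J ∧ ∀ k, 1 ≤ k → k < m → f^[k] x ∉ J

/-- `C` is a return domain of `J`: a connected component of `J ∩ D(J)`. -/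
def IsReturnDomain (f : ℝ → ℝ) (J C : Set ℝ) : Prop :=
  ∃ x ∈ J ∩ entryDom f J, C = connectedComponentIn (J ∩ entryDom f J) x

/-- The forward orbit of the critical point, `orb⁺(c) = {f^k c : k ≥ 1}`. -/
def posOrbit (f : ℝ → ℝ) (c : ℝ) : Set ℝ := {y | ∃ k, 1 ≤ k ∧ f^[k] c = y}

namespace FibAux

open Set

/-! ### fibS facts -/

lemma fibS_one_le : ∀ n, 1 ≤ fibS n
  | 0 => le_refl 1
  | 1 => one_le_two
  | n + 2 => le_trans (fibS_one_le (n+1)) (Nat.le_add_right _ _)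

lemma fibS_lt_succ : ∀ n, fibS n < fibS (n + 1)
  | 0 => one_lt_two
  | n + 1 => by
      show fibS (n+1) < fibS (n+1) + fibS n
      have := fibS_one_le n; omega

lemma fibS_mono : StrictMono fibS := strictMono_nat_of_lt_succ fibS_lt_succ

lemma fibS_le_of_le {i j : ℕ} (h : i ≤ j) : fibS i ≤ fibS j := fibS_mono.monotone h

lemma fibS_add_two (n : ℕ) : fibS (n + 2) = fibS (n + 1) + fibS n := rfl

lemma fibS_ge (n : ℕ) : n + 1 ≤ fibS n := by
  induction n with
  | zero => simp [fibS]
  | succ m ih =>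
      have := fibS_lt_succ m; omega

lemma exists_level {k : ℕ} (hk : 1 ≤ k) : ∃ i, fibS i ≤ k ∧ k < fibS (i + 1) := by
  induction k with
  | zero => omega
  | succ m ih =>
      rcases Nat.eq_or_lt_of_le hk with h1 | h1
      · exact ⟨0, by simp [fibS, ← h1]⟩
      · have hm : 1 ≤ m := by omega
        obtain ⟨i, hi1, hi2⟩ := ih hm
        rcases Nat.lt_or_ge (m + 1) (fibS (i + 1)) with h | h
        · exact ⟨i, by omega, h⟩
        · have : m + 1 = fibS (i + 1) := by omega
          exact ⟨i + 1, by omega, by rw [this]; exact fibS_lt_succ (i+1)⟩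

lemma level_le {j i : ℕ} (h : j < fibS i) (i' : ℕ) (h1 : fibS i' ≤ j) : i' < i := by
  by_contra hc
  push_neg at hc
  exact absurd (lt_of_le_of_lt h1 h) (not_lt.2 (fibS_le_of_le hc))

end FibAux

namespace FibAux
open Set

structure Setup (f : ℝ → ℝ) (c q : ℝ) (I : ℕ → Set ℝ) : Prop where
  hf : IsUnimodal f c
  hsymm : SymmetricAbout f c
  hq : f q = q
  hqI : q ∈ Set.Ioo c 1
  hI1 : I 1 = Set.Ioo (2 * c - q) q
  hIc : ∀ k, 1 ≤ k → c ∈ I (k + 1) ∧ IsReturnDomain f (I k) (I (k + 1))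
  hbranch : ∀ k, 1 ≤ k →
      ∃ I0 I1 : Set ℝ, c ∈ I0 ∧ I0 ≠ I1 ∧
        IsReturnDomain f (I k) I0 ∧ (I0 ∩ posOrbit f c).Nonempty ∧
        IsReturnDomain f (I k) I1 ∧ (I1 ∩ posOrbit f c).Nonempty ∧
        (∀ C, IsReturnDomain f (I k) C → (C ∩ posOrbit f c).Nonempty → C = I0 ∨ C = I1) ∧
        (∀ x ∈ I0, ReturnTimeEq f (I k) x (fibS (k + 1))) ∧
        (∀ x ∈ I1, ReturnTimeEq f (I k) x (fibS k))
  hnotin : ∀ k, 1 ≤ k → f^[fibS k] c ∉ I k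

namespace Setup

variable {f : ℝ → ℝ} {c q : ℝ} {I : ℕ → Set ℝ} (hs : Setup f c q I)
include hs

lemma hcont : ContinuousOn f (Icc 0 1) := hs.hf.1
lemma hmaps : MapsTo f (Icc 0 1) (Icc (0:ℝ) 1) := hs.hf.2.1
lemma hmono : StrictMonoOn f (Icc 0 c) := hs.hf.2.2.2.2.2.1
lemma hanti : StrictAntiOn f (Icc c 1) := hs.hf.2.2.2.2.2.2
lemma hc0 : 0 < c := hs.hf.2.2.2.2.1.1
lemma hc1 : c < 1 := hs.hf.2.2.2.2.1.2
lemma hcq : c < q := hs.hqI.1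
lemma hq1 : q < 1 := hs.hqI.2
lemma hq0 : 0 < q := lt_trans hs.hc0 hs.hcq
lemma c_unit : c ∈ Icc (0:ℝ) 1 := ⟨le_of_lt hs.hc0, le_of_lt hs.hc1⟩
lemma q_unit : q ∈ Icc (0:ℝ) 1 := ⟨le_of_lt hs.hq0, le_of_lt hs.hq1⟩

lemma fc_gt_q : q < f c := by
  have := hs.hanti ⟨le_refl c, le_of_lt hs.hc1⟩ ⟨le_of_lt hs.hcq, le_of_lt hs.hq1⟩ hs.hcq
  rw [hs.hq] at this; exact this

lemma fc_unit : f c ∈ Icc (0:ℝ) 1 := hs.hmaps hs.c_unit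

lemma mapsTo_iter (k : ℕ) : MapsTo (f^[k]) (Icc 0 1) (Icc (0:ℝ) 1) := hs.hmaps.iterate k

lemma contOn_iter (k : ℕ) : ContinuousOn (f^[k]) (Icc 0 1) := by
  induction k with
  | zero => simpa using continuousOn_id
  | succ n ih => rw [Function.iterate_succ]; exact ih.comp hs.hcont hs.hmaps

lemma symm_iter {x : ℝ} (hx : x ∈ Icc (0:ℝ) 1) (hx' : 2 * c - x ∈ Icc (0:ℝ) 1)
    {k : ℕ} (hk : 1 ≤ k) : f^[k] (2 * c - x) = f^[k] x := by
  obtain ⟨j, rfl⟩ := Nat.exists_eq_add_of_le hk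
  rw [add_comm, Function.iterate_add_apply, Function.iterate_add_apply]
  congr 1
  simpa using hs.hsymm x hx hx'

/-! ### preimage sets -/

lemma preSet_nonempty' : ∀ k : ℕ, ∃ x, x ∈ Icc 0 c ∧ f^[k] x = c := by
  intro k
  induction k with
  | zero => exact ⟨c, ⟨le_of_lt hs.hc0, le_refl c⟩, rfl⟩
  | succ n ih =>
      obtain ⟨x, hx, hfx⟩ := ih
      have hsub : Icc (0:ℝ) c ⊆ Icc 0 1 := Icc_subset_Icc (le_refl 0) (le_of_lt hs.hc1)
      have hx01 : x ∈ Icc (f 0) (f c) := by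
        rw [hs.hf.2.2.1]
        exact ⟨hx.1, le_trans hx.2 (le_of_lt (lt_trans hs.hcq hs.fc_gt_q))⟩
      obtain ⟨y, hy, hfy⟩ := intermediate_value_Icc (le_of_lt hs.hc0) (hs.hcont.mono hsub) hx01
      exact ⟨y, hy, by rw [Function.iterate_succ_apply, hfy, hfx]⟩

lemma preSet_nonempty (k : ℕ) : {x | x ∈ Icc (0:ℝ) 1 ∧ f^[k] x = c}.Nonempty := by
  obtain ⟨x, hx, hfx⟩ := hs.preSet_nonempty' k
  exact ⟨x, ⟨hx.1, le_trans hx.2 (le_of_lt hs.hc1)⟩, hfx⟩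

lemma preSet_compact (k : ℕ) : IsCompact {x | x ∈ Icc (0:ℝ) 1 ∧ f^[k] x = c} := by
  have hcl : IsClosed {x | x ∈ Icc (0:ℝ) 1 ∧ f^[k] x = c} := by
    have : {x | x ∈ Icc (0:ℝ) 1 ∧ f^[k] x = c} = Icc 0 1 ∩ (f^[k]) ⁻¹' {c} := by
      ext x; simp [Set.mem_preimage]
    rw [this]
    exact (hs.contOn_iter k).preimage_isClosed_of_isClosed isClosed_Icc isClosed_singleton
  exact isCompact_Icc.of_isClosed_subset hcl (fun x hx => hx.1)

lemma exists_realizer (k : ℕ) : ∃ z, (z ∈ Icc (0:ℝ) 1 ∧ f^[k] z = c) ∧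
    |z - c| = preimDist f c k ∧ ∀ y, y ∈ Icc (0:ℝ) 1 → f^[k] y = c → |z - c| ≤ |y - c| := by
  obtain ⟨z, hz, hmin⟩ := (hs.preSet_compact k).exists_isMinOn (hs.preSet_nonempty k)
    ((continuous_id.sub continuous_const).abs.continuousOn)
  refine ⟨z, hz, ?_, fun y h1 h2 => hmin ⟨h1, h2⟩⟩
  have : IsLeast ((fun x => |x - c|) '' {x | x ∈ Icc (0:ℝ) 1 ∧ f^[k] x = c}) (|z - c|) :=
    ⟨mem_image_of_mem _ hz, by rintro _ ⟨y, hy, rfl⟩; exact hmin hy⟩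
  exact (this.csInf_eq).symm

lemma preimDist_le {k : ℕ} {y : ℝ} (h1 : y ∈ Icc (0:ℝ) 1) (h2 : f^[k] y = c) :
    preimDist f c k ≤ |y - c| := by
  obtain ⟨z, _, hz2, hz3⟩ := hs.exists_realizer k
  rw [← hz2]; exact hz3 y h1 h2

end Setup
end FibAux

namespace FibAux
open Set

/-! ### generic interval/component lemmas -/

lemma Ioo_symm_endpoints {a b t : ℝ} (hab : a < b)
    (h : ∀ y ∈ Ioo a b, 2 * t - y ∈ Ioo a b) : a = 2 * t - b := by
  have h1 : b ≤ 2 * t - a := by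
    by_contra hc
    push_neg at hc
    set y := max ((a + b) / 2) ((2 * t - a + b) / 2) with hy
    have hy1 : a < y := lt_of_lt_of_le (by linarith) (le_max_left _ _)
    have hy2 : y < b := max_lt (by linarith) (by linarith)
    have hy3 : 2 * t - a < y := lt_of_lt_of_le (by linarith) (le_max_right _ _)
    have := (h y ⟨hy1, hy2⟩).1
    linarith
  have h2 : 2 * t - b ≤ a := by
    by_contra hc
    push_neg at hc
    set y := min ((a + b) / 2) ((a + (2 * t - b)) / 2) with hy
    have hy1 : y < b := lt_of_le_of_lt (min_le_left _ _) (by linarith)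
    have hy2 : a < y := lt_min (by linarith) (by linarith)
    have hy3 : y < 2 * t - b := lt_of_le_of_lt (min_le_right _ _) (by linarith)
    have := (h y ⟨hy2, hy1⟩).2
    linarith
  linarith

lemma open_cc_Ioo {S : Set ℝ} (hS : IsOpen S) {x A B : ℝ} (hx : x ∈ S) (hsub : S ⊆ Ioo A B) :
    ∃ a b, a < x ∧ x < b ∧ connectedComponentIn S x = Ioo a b ∧ A ≤ a ∧ b ≤ B := by
  set C := connectedComponentIn S x with hC
  have hCo : IsOpen C := hS.connectedComponentIn
  have hCx : x ∈ C := mem_connectedComponentIn hx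
  have hCsub : C ⊆ Ioo A B := (connectedComponentIn_subset S x).trans hsub
  have hne : C.Nonempty := ⟨x, hCx⟩
  have hbddA : BddAbove C := ⟨B, fun y hy => le_of_lt (hCsub hy).2⟩
  have hbddB : BddBelow C := ⟨A, fun y hy => le_of_lt (hCsub hy).1⟩
  have hsupn : sSup C ∉ C := by
    intro hmem
    obtain ⟨ε, hε, hball⟩ := Metric.isOpen_iff.1 hCo _ hmem
    have : sSup C + ε / 2 ∈ C := by
      apply hball
      rw [Metric.mem_ball, Real.dist_eq, show sSup C + ε / 2 - sSup C = ε / 2 by ring,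
        abs_of_nonneg (by linarith)]
      linarith
    have := le_csSup hbddA this
    linarith
  have hinfn : sInf C ∉ C := by
    intro hmem
    obtain ⟨ε, hε, hball⟩ := Metric.isOpen_iff.1 hCo _ hmem
    have : sInf C - ε / 2 ∈ C := by
      apply hball
      rw [Metric.mem_ball, Real.dist_eq, show sInf C - ε / 2 - sInf C = -(ε / 2) by ring,
        abs_neg, abs_of_nonneg (by linarith)]
      linarith
    have := csInf_le hbddB this
    linarith
  have hCeq : C = Ioo (sInf C) (sSup C) := by
    apply Subset.antisymm
    · intro y hy
      refine ⟨lt_of_le_of_ne (csInf_le hbddB hy) ?_, lt_of_le_of_ne (le_csSup hbddA hy) ?_⟩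
      · intro h; rw [h] at hinfn; exact hinfn hy
      · intro h; rw [← h] at hsupn; exact hsupn hy
    · intro y hy
      obtain ⟨u, huC, hu⟩ := exists_lt_of_csInf_lt hne hy.1
      obtain ⟨v, hvC, hv⟩ := exists_lt_of_lt_csSup hne hy.2
      have hord : OrdConnected C := isPreconnected_connectedComponentIn.ordConnected
      exact hord.out huC hvC ⟨le_of_lt hu, le_of_lt hv⟩
  have hxa : sInf C < x := lt_of_le_of_ne (csInf_le hbddB hCx) (by intro h; rw [h] at hinfn; exact hinfn hCx)
  have hxb : x < sSup C := lt_of_le_of_ne (le_csSup hbddA hCx) (by intro h; rw [← h] at hsupn; exact hsupn hCx)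
  exact ⟨sInf C, sSup C, hxa, hxb, hCeq,
    le_csInf hne (fun y hy => le_of_lt (hCsub hy).1),
    csSup_le hne (fun y hy => le_of_lt (hCsub hy).2)⟩

namespace Setup

variable {f : ℝ → ℝ} {c q : ℝ} {I : ℕ → Set ℝ} (hs : Setup f c q I)
include hs

lemma qhat_lt_c : 2 * c - q < c := by have := hs.hcq; linarith

lemma cmemI : ∀ n, 1 ≤ n → c ∈ I n := by
  intro n hn
  match n, hn with
  | 1, _ => rw [hs.hI1]; exact ⟨hs.qhat_lt_c, hs.hcq⟩
  | (m+2), _ => exact (hs.hIc (m+1) (by omega)).1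

lemma central_eq {n : ℕ} (hn : 1 ≤ n) :
    I (n + 1) = connectedComponentIn (I n ∩ entryDom f (I n)) c := by
  obtain ⟨x, hxS, hEq⟩ := (hs.hIc n hn).2
  have hc : c ∈ connectedComponentIn (I n ∩ entryDom f (I n)) x := by
    rw [← hEq]; exact (hs.hIc n hn).1
  rw [hEq]; exact connectedComponentIn_eq hc

lemma nest_sub {n : ℕ} (hn : 1 ≤ n) : I (n + 1) ⊆ I n := by
  rw [hs.central_eq hn]
  exact (connectedComponentIn_subset _ _).trans (inter_subset_left)

lemma ret_central {n : ℕ} (hn : 1 ≤ n) {x : ℝ} (hx : x ∈ I (n + 1)) :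
    ReturnTimeEq f (I n) x (fibS (n + 1)) := by
  obtain ⟨I0, I1, hcI0, _, hI0dom, _, _, _, _, hret0, _⟩ := hs.hbranch n hn
  obtain ⟨x0, hx0S, hEq0⟩ := hI0dom
  have : I0 = I (n + 1) := by
    rw [hEq0, hs.central_eq hn]
    exact connectedComponentIn_eq (by rw [← hEq0]; exact hcI0)
  exact hret0 x (by rwa [this])

lemma ret_I1 {n : ℕ} (hn : 1 ≤ n) : ∃ y ∈ I n, f^[fibS n] y ∈ I n := by
  obtain ⟨I0, I1, _, _, _, _, hI1dom, _, _, _, hret1⟩ := hs.hbranch n hn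
  obtain ⟨x1, hx1S, hEq1⟩ := hI1dom
  have hx1 : x1 ∈ I1 := by rw [hEq1]; exact mem_connectedComponentIn hx1S
  exact ⟨x1, hx1S.1, (hret1 x1 hx1).2.1⟩

lemma c_ret {n : ℕ} (hn : 1 ≤ n) : ReturnTimeEq f (I n) c (fibS (n + 1)) :=
  hs.ret_central hn (hs.cmemI (n + 1) (by omega))

lemma aperiodic {p : ℕ} (hp : 1 ≤ p) : f^[p] c ≠ c := by
  intro h
  have h2 := (hs.c_ret (n := p) hp).2.2 p hp (by have := fibS_ge (p + 1); omega)
  rw [h] at h2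
  exact h2 (hs.cmemI p hp)

lemma d_pos {k : ℕ} (hk : 1 ≤ k) : 0 < preimDist f c k := by
  obtain ⟨z, ⟨hz1, hz2⟩, hz3, _⟩ := hs.exists_realizer k
  rw [← hz3]
  refine abs_pos.2 (sub_ne_zero.2 ?_)
  intro h; rw [h] at hz2; exact hs.aperiodic hk hz2

lemma iter_fixed (j : ℕ) : f^[j] q = q := by
  induction j with
  | zero => rfl
  | succ m ih => rw [Function.iterate_succ_apply', ih, hs.hq]

lemma c2_lt_q : f^[2] c < q := by
  have hc1q : q < f c := hs.fc_gt_q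
  have hc1u : f c ∈ Icc (0:ℝ) 1 := hs.fc_unit
  have : f (f c) < f q := hs.hanti ⟨le_of_lt hs.hcq, le_of_lt hs.hq1⟩
    ⟨le_of_lt (lt_trans hs.hcq hc1q), hc1u.2⟩ hc1q
  rw [hs.hq] at this
  simpa [Function.iterate_succ_apply, Function.iterate_one] using this

lemma c2_le_qhat : f^[2] c ≤ 2 * c - q := by
  have h2 := (hs.c_ret (n := 1) (le_refl 1)).2.2 2 one_le_two (by norm_num [fibS])
  rw [hs.hI1] at h2
  have hlt := hs.c2_lt_q
  by_contra hc
  push_neg at hc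
  exact h2 ⟨hc, hlt⟩

lemma qhat_pos : 0 < 2 * c - q := by
  have h0 : 0 ≤ 2 * c - q := le_trans (hs.mapsTo_iter 2 hs.c_unit).1 hs.c2_le_qhat
  rcases lt_or_eq_of_le h0 with h | h
  · exact h
  · exfalso
    have hq' : (2:ℝ) * c - q ∈ Icc (0:ℝ) 1 := ⟨h0, by have := hs.hcq; have := hs.hc1; linarith⟩
    have hsym := hs.hsymm q hs.q_unit hq'
    rw [hs.hq, ← h] at hsym
    rw [hs.hf.2.2.1] at hsym
    exact absurd hsym.symm (ne_of_gt hs.hq0)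

lemma entry_open {n : ℕ} {b : ℝ} (hb : c < b) (hbq : b ≤ q) (hIn : I n = Ioo (2 * c - b) b) :
    IsOpen (I n ∩ entryDom f (I n)) := by
  have hsub : I n ⊆ Icc (0:ℝ) 1 := by
    rw [hIn]
    intro y hy
    have h1 : 0 < 2 * c - q := hs.qhat_pos
    have h2 := hs.hq1
    constructor <;> [nlinarith [hy.1]; nlinarith [hy.2]]
  refine isOpen_iff_forall_mem_open.2 ?_
  rintro x ⟨hxI, k, hk1, hk2⟩
  have hIno : IsOpen (I n) := by rw [hIn]; exact isOpen_Ioo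
  have hcw : ContinuousWithinAt (f^[k]) (Icc 0 1) x := hs.contOn_iter k x (hsub hxI)
  have hpre : (f^[k]) ⁻¹' (I n) ∈ nhdsWithin x (Icc 0 1) := hcw (hIno.mem_nhds hk2)
  obtain ⟨U, hU, hxU, hUsub⟩ := mem_nhdsWithin.1 hpre
  refine ⟨U ∩ I n, ?_, hU.inter hIno, hxU, hxI⟩
  rintro y ⟨hyU, hyI⟩
  exact ⟨hyI, k, hk1, hUsub ⟨hyU, hsub hyI⟩⟩

lemma I_sub_unit {n : ℕ} {b : ℝ} (hb : c < b) (hbq : b ≤ q) (hIn : I n = Ioo (2 * c - b) b) :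
    I n ⊆ Icc (0:ℝ) 1 := by
  rw [hIn]
  intro y hy
  have h1 : 0 < 2 * c - q := hs.qhat_pos
  have h2 := hs.hq1
  constructor <;> [nlinarith [hy.1]; nlinarith [hy.2]]

lemma entry_symm {n : ℕ} {b : ℝ} (hb : c < b) (hbq : b ≤ q) (hIn : I n = Ioo (2 * c - b) b) :
    ∀ x ∈ I n ∩ entryDom f (I n), 2 * c - x ∈ I n ∩ entryDom f (I n) := by
  rintro x ⟨hxI, k, hk1, hk2⟩
  have hsub := hs.I_sub_unit hb hbq hIn
  have hxI' : 2 * c - x ∈ I n := by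
    rw [hIn] at hxI ⊢
    exact ⟨by linarith [hxI.2], by linarith [hxI.1]⟩
  have heq : f^[k] (2 * c - x) = f^[k] x := hs.symm_iter (hsub hxI) (hsub hxI') hk1
  exact ⟨hxI', k, hk1, by rwa [heq]⟩

/-- The principal nest: symmetric interval structure and boundary orbit avoidance. -/
lemma nest_struct : ∀ n, 1 ≤ n → ∃ b, (c < b ∧ b ≤ q ∧ I n = Ioo (2 * c - b) b ∧
    (∀ j, 1 ≤ j → f^[j] b ∉ I n)) ∧
    (∀ m, 1 ≤ m → n = m + 1 → ∀ j, 1 ≤ j → f^[j] b ∉ I m) := by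
  intro n
  induction n with
  | zero => omega
  | succ n' ih =>
    intro _
    rcases Nat.eq_zero_or_pos n' with h0 | hn'
    · subst h0
      refine ⟨q, ⟨hs.hcq, le_refl q, hs.hI1, ?_⟩, by omega⟩
      intro j _
      rw [hs.iter_fixed j, hs.hI1]
      exact fun h => lt_irrefl q h.2
    · obtain ⟨b0, ⟨hb0c, hb0q, hI0eq, hb0orb⟩, _⟩ := ih hn'
      set S := I n' ∩ entryDom f (I n') with hSdef
      have hSo : IsOpen S := hs.entry_open hb0c hb0q hI0eq
      have hcS : c ∈ S := by
        have h1 : c ∈ I (n' + 1) := hs.cmemI (n' + 1) (by omega)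
        rw [hs.central_eq hn'] at h1
        exact connectedComponentIn_subset _ _ h1
      have hSsub : S ⊆ Ioo (2 * c - b0) b0 := by
        rw [← hI0eq]; exact inter_subset_left
      obtain ⟨a, b, hac, hcb, hCeq, haA, hbB⟩ := open_cc_Ioo hSo hcS hSsub
      have hIeq : I (n' + 1) = Ioo a b := by rw [hs.central_eq hn']; exact hCeq
      have hsig : ∀ y ∈ Ioo a b, 2 * c - y ∈ Ioo a b := by
        have hSsym := hs.entry_symm hb0c hb0q hI0eq
        have hpre : IsPreconnected ((fun y => 2 * c - y) '' (Ioo a b)) :=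
          isPreconnected_Ioo.image _ ((continuous_const.sub continuous_id).continuousOn)
        have hcm : c ∈ (fun y => 2 * c - y) '' (Ioo a b) := ⟨c, ⟨hac, hcb⟩, by ring⟩
        have hsubS : (fun y => 2 * c - y) '' (Ioo a b) ⊆ S := by
          rintro _ ⟨y, hy, rfl⟩
          have hyC : y ∈ connectedComponentIn S c := by rw [hCeq]; exact hy
          exact hSsym y (connectedComponentIn_subset _ _ hyC)
        have himg := hpre.subset_connectedComponentIn hcm hsubS
        rw [hCeq] at himg
        intro y hy
        exact himg ⟨y, hy, rfl⟩
      have hab : a = 2 * c - b := Ioo_symm_endpoints (lt_trans hac hcb) hsig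
      have hbq' : b ≤ q := le_trans hbB hb0q
      have horb : ∀ j, 1 ≤ j → f^[j] b ∉ I n' := by
        rcases eq_or_lt_of_le hbB with hbb | hbb
        · intro j hj; rw [hbb]; exact hb0orb j hj
        · have hbI : b ∈ I n' := by
            rw [hI0eq]
            exact ⟨by linarith, hbb⟩
          have hbnotD : b ∉ entryDom f (I n') := by
            intro hbe
            have hbS : b ∈ S := ⟨hbI, hbe⟩
            obtain ⟨ε, hε, hball⟩ := Metric.isOpen_iff.1 hSo.connectedComponentIn b
              (mem_connectedComponentIn hbS)
            set y := b - min (ε / 2) ((b - c) / 2) with hy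
            have hmin1 : 0 < min (ε / 2) ((b - c) / 2) := lt_min (by linarith) (by linarith)
            have hyball : y ∈ Metric.ball b ε := by
              rw [Metric.mem_ball, Real.dist_eq, hy,
                show b - min (ε / 2) ((b - c) / 2) - b = -(min (ε / 2) ((b - c) / 2)) by ring,
                abs_neg, abs_of_nonneg (le_of_lt hmin1)]
              exact lt_of_le_of_lt (min_le_left _ _) (by linarith)
            have hm2 : min (ε / 2) ((b - c) / 2) ≤ (b - c) / 2 := min_le_right _ _
            have hyC : y ∈ Ioo a b := by
              constructor
              · rw [hy]; linarith
              · rw [hy]; linarith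
            have h1 : connectedComponentIn S b = connectedComponentIn S y :=
              connectedComponentIn_eq (hball hyball)
            have h2 : connectedComponentIn S c = connectedComponentIn S y :=
              connectedComponentIn_eq (by rw [hCeq]; exact hyC)
            have : b ∈ Ioo a b := by
              rw [← hCeq, h2, ← h1]
              exact mem_connectedComponentIn hbS
            exact lt_irrefl b this.2
          intro j hj hmem
          exact hbnotD ⟨j, hj, hmem⟩
      refine ⟨b, ⟨hcb, hbq', by rw [hIeq, hab], ?_⟩, ?_⟩
      · intro j hj hmem
        exact horb j hj (hs.nest_sub hn' hmem)
      · intro m hm hnm j hj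
        have : m = n' := by omega
        rw [this]
        exact horb j hj

end Setup
end FibAux

namespace FibAux
open Set

def MonoAnti (g : ℝ → ℝ) (s : Set ℝ) : Prop := StrictMonoOn g s ∨ StrictAntiOn g s

namespace Setup

variable {f : ℝ → ℝ} {c q : ℝ} {I : ℕ → Set ℝ} (hs : Setup f c q I)
include hs

/-- If no point of `(u,v)` is precritical of order `< m`, then `f^[m]` is strictly
monotone or strictly antitone on `[u,v]`. -/
lemma iterMono : ∀ (m : ℕ) (u v : ℝ), 0 ≤ u → v ≤ 1 → u ≤ v →
    (∀ x ∈ Ioo u v, ∀ j, j < m → f^[j] x ≠ c) → MonoAnti (f^[m]) (Icc u v) := by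
  intro m
  induction m with
  | zero =>
      intro u v _ _ _ _
      exact Or.inl (fun a _ b _ h => by simpa using h)
  | succ m ih =>
      intro u v hu0 hv1 huv hcrit
      have hcnot : c ∉ Ioo u v := fun hc => hcrit c hc 0 (Nat.succ_pos m) rfl
      have huu : u ∈ Icc (0:ℝ) 1 := ⟨hu0, le_trans huv hv1⟩
      have hvu : v ∈ Icc (0:ℝ) 1 := ⟨le_trans hu0 huv, hv1⟩
      have hsub01 : Icc u v ⊆ Icc (0:ℝ) 1 := Icc_subset_Icc hu0 hv1
      -- f is strictly monotone or antitone on [u,v]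
      have hinner : MonoAnti f (Icc u v) := by
        rcases le_or_gt v c with hvc | hvc
        · exact Or.inl (hs.hmono.mono (Icc_subset_Icc hu0 hvc))
        · rcases le_or_gt c u with hcu | hcu
          · exact Or.inr (hs.hanti.mono (Icc_subset_Icc hcu hv1))
          · exact absurd ⟨hcu, hvc⟩ hcnot
      set p := min (f u) (f v) with hp
      set r := max (f u) (f v) with hr
      have hpr : p ≤ r := min_le_max
      have hp0 : 0 ≤ p := le_min (hs.hmaps huu).1 (hs.hmaps hvu).1
      have hr1 : r ≤ 1 := max_le (hs.hmaps huu).2 (hs.hmaps hvu).2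
      have hmapsf : MapsTo f (Icc u v) (Icc p r) := by
        intro x hx
        rcases hinner with hmono | hanti
        · exact ⟨le_trans (min_le_left _ _) (hmono.monotoneOn (left_mem_Icc.2 huv) hx hx.1),
            le_trans (hmono.monotoneOn hx (right_mem_Icc.2 huv) hx.2) (le_max_right _ _)⟩
        · exact ⟨le_trans (min_le_right _ _) (hanti.antitoneOn hx (right_mem_Icc.2 huv) hx.2),
            le_trans (hanti.antitoneOn (left_mem_Icc.2 huv) hx hx.1) (le_max_left _ _)⟩
      have hIH : MonoAnti (f^[m]) (Icc p r) := by
        apply ih p r hp0 hr1 hpr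
        intro y hy j hj
        have hyIcc : y ∈ uIcc (f u) (f v) := ⟨le_of_lt hy.1, le_of_lt hy.2⟩
        obtain ⟨x, hx, hfx⟩ := intermediate_value_uIcc
          (hs.hcont.mono (by rw [uIcc_of_le huv]; exact hsub01)) hyIcc
        rw [uIcc_of_le huv] at hx
        have hxne_u : x ≠ u := by
          intro h; rw [h] at hfx; rw [← hfx] at hy
          rcases le_total (f u) (f v) with hle | hle
          · exact absurd hy.1 (by simp [hp, min_eq_left hle])
          · exact absurd hy.2 (by simp [hr, max_eq_left hle])
        have hxne_v : x ≠ v := by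
          intro h; rw [h] at hfx; rw [← hfx] at hy
          rcases le_total (f u) (f v) with hle | hle
          · exact absurd hy.2 (by simp [hr, max_eq_right hle])
          · exact absurd hy.1 (by simp [hp, min_eq_right hle])
        have hxIoo : x ∈ Ioo u v :=
          ⟨lt_of_le_of_ne hx.1 (Ne.symm hxne_u), lt_of_le_of_ne hx.2 hxne_v⟩
        rw [← hfx, ← Function.iterate_succ_apply]
        exact hcrit x hxIoo (j + 1) (by omega)
      rw [Function.iterate_succ]
      rcases hIH with h1 | h1 <;> rcases hinner with h2 | h2
      · exact Or.inl (h1.comp h2 hmapsf)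
      · exact Or.inr (h1.comp_strictAntiOn h2 hmapsf)
      · exact Or.inr (h1.comp_strictMonoOn h2 hmapsf)
      · exact Or.inl (h1.comp h2 hmapsf)

end Setup
end FibAux

namespace FibAux
open Set

lemma monoAnti_mem_uIcc {g : ℝ → ℝ} {u v y : ℝ} (h : MonoAnti g (Icc u v)) (huv : u ≤ v)
    (hy : y ∈ Icc u v) : g y ∈ uIcc (g u) (g v) := by
  have hu : u ∈ Icc u v := left_mem_Icc.2 huv
  have hv : v ∈ Icc u v := right_mem_Icc.2 huv
  rcases h with h | h
  · exact mem_uIcc.2 (Or.inl ⟨h.monotoneOn hu hy hy.1, h.monotoneOn hy hv hy.2⟩)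
  · exact mem_uIcc.2 (Or.inr ⟨h.antitoneOn hy hv hy.2, h.antitoneOn hu hy hy.1⟩)

lemma monoAnti_mem_uIoo {g : ℝ → ℝ} {u v y : ℝ} (h : MonoAnti g (Icc u v))
    (hy : y ∈ Ioo u v) : (g u < g y ∧ g y < g v) ∨ (g v < g y ∧ g y < g u) := by
  have huv : u ≤ v := le_of_lt (lt_trans hy.1 hy.2)
  have hu : u ∈ Icc u v := left_mem_Icc.2 huv
  have hv : v ∈ Icc u v := right_mem_Icc.2 huv
  have hyI : y ∈ Icc u v := ⟨hy.1.le, hy.2.le⟩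
  rcases h with h | h
  · exact Or.inl ⟨h hu hyI hy.1, h hyI hv hy.2⟩
  · exact Or.inr ⟨h hyI hv hy.2, h hu hyI hy.1⟩

namespace Setup

variable {f : ℝ → ℝ} {c q : ℝ} {I : ℕ → Set ℝ} (hs : Setup f c q I)
include hs

lemma qhat_unit : 2 * c - q ∈ Icc (0:ℝ) 1 :=
  ⟨hs.qhat_pos.le, by have := hs.qhat_lt_c; have := hs.hc1; linarith⟩

lemma fqhat : f (2 * c - q) = q := by
  have := hs.hsymm q hs.q_unit hs.qhat_unit
  rw [hs.hq] at this; exact this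

lemma noLow : ∀ n, 1 ≤ n → ∀ x ∈ I n, ∀ j, 1 ≤ j → j < fibS n → f^[j] x ≠ c := by
  intro n hn
  match n, hn with
  | 1, _ =>
    intro x hx j hj1 hj2
    have hj : j = 1 := by have : fibS 1 = 2 := rfl; omega
    subst hj
    rw [hs.hI1] at hx
    simp only [Function.iterate_one]
    have hfx : q < f x := by
      rcases le_or_gt x c with hxc | hxc
      · have h1 : (2 * c - q) ∈ Icc (0:ℝ) c := ⟨hs.qhat_pos.le, (hs.qhat_lt_c).le⟩
        have h2 : x ∈ Icc (0:ℝ) c := ⟨le_trans hs.qhat_pos.le hx.1.le, hxc⟩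
        have := hs.hmono h1 h2 hx.1
        rwa [hs.fqhat] at this
      · have h1 : x ∈ Icc c 1 := ⟨hxc.le, le_trans hx.2.le hs.hq1.le⟩
        have h2 : q ∈ Icc c 1 := ⟨hs.hcq.le, hs.hq1.le⟩
        have := hs.hanti h1 h2 hx.2
        rwa [hs.hq] at this
    intro h; rw [h] at hfx; exact absurd hfx (not_lt.2 hs.hcq.le)
  | (m+2), _ =>
    intro x hx j hj1 hj2
    intro h
    have := (hs.ret_central (n := m+1) (by omega) hx).2.2 j hj1 hj2
    rw [h] at this
    exact this (hs.cmemI (m+1) (by omega))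

lemma ball : ∀ m : ℕ, ∀ x ∈ I (m + 1), |x - c| < preimDist f c (fibS m) := by
  intro m x hx
  obtain ⟨b, ⟨hcb, hbq, hIeq, _⟩, _⟩ := hs.nest_struct (m+1) (by omega)
  obtain ⟨z, ⟨hz1, hz2⟩, hz3, _⟩ := hs.exists_realizer (fibS m)
  have hnotmem : ∀ y, y ∈ Icc (0:ℝ) 1 → f^[fibS m] y = c → y ∉ I (m+1) := by
    intro y _ hy hmem
    exact hs.noLow (m+1) (by omega) y hmem (fibS m) (fibS_one_le m) (fibS_lt_succ m) hy
  have hbd : b - c ≤ preimDist f c (fibS m) := by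
    rw [← hz3]
    rcases le_or_gt c z with hcz | hcz
    · have hz4 : z ∉ I (m+1) := hnotmem z hz1 hz2
      rw [hIeq] at hz4
      have : ¬ (2*c - b < z ∧ z < b) := hz4
      have hzb : b ≤ z := by
        by_contra hzb'
        push_neg at hzb'
        exact this ⟨by linarith [hs.qhat_lt_c, hcb], hzb'⟩
      rw [abs_of_nonneg (by linarith)]; linarith
    · rcases le_or_gt (2*c - z) 1 with hsz | hsz
      · have hsz0 : 2*c - z ∈ Icc (0:ℝ) 1 := ⟨by have := hs.hc0; linarith, hsz⟩
        have hfz : f^[fibS m] (2*c - z) = c := by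
          rw [hs.symm_iter hz1 hsz0 (fibS_one_le m)]; exact hz2
        have hz4 : (2*c - z) ∉ I (m+1) := hnotmem _ hsz0 hfz
        rw [hIeq] at hz4
        have : ¬ (2*c - b < 2*c - z ∧ 2*c - z < b) := hz4
        have hzb : b ≤ 2*c - z := by
          by_contra hzb'
          push_neg at hzb'
          exact this ⟨by linarith, hzb'⟩
        rw [abs_of_nonpos (by linarith)]; linarith
      · rw [abs_of_nonpos (by linarith)]
        have := hs.hq1; linarith
  rw [hIeq] at hx
  rw [abs_lt]
  constructor <;> [linarith [hx.1]; linarith [hx.2]]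

lemma N4 : ∀ n, 1 ≤ n → ∃ x ∈ I n, f^[fibS n] x = c := by
  intro n hn
  match n, hn with
  | 1, _ =>
    have hg2q : f^[2] q = q := hs.iter_fixed 2
    have h2 : f^[2] c ≤ 2*c - q := hs.c2_le_qhat
    have hcq := hs.hcq
    have hcmem : c ∈ uIcc (f^[2] c) (f^[2] q) := by
      rw [hg2q]
      exact mem_uIcc.2 (Or.inl ⟨by linarith [hs.qhat_lt_c], hcq.le⟩)
    have hsub : uIcc c q ⊆ Icc (0:ℝ) 1 := by
      rw [uIcc_of_le hcq.le]
      exact Icc_subset_Icc hs.hc0.le hs.hq1.le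
    obtain ⟨x, hx, hfx⟩ := intermediate_value_uIcc ((hs.contOn_iter 2).mono hsub) hcmem
    rw [uIcc_of_le hcq.le] at hx
    have hxc : x ≠ c := by
      intro h; rw [h] at hfx
      have := hs.qhat_lt_c; linarith [hfx ▸ h2]
    have hxq : x ≠ q := by
      intro h; rw [h, hg2q] at hfx; exact absurd hfx (ne_of_gt hcq)
    refine ⟨x, ?_, by show f^[fibS 1] x = c; exact hfx⟩
    rw [hs.hI1]
    exact ⟨lt_of_lt_of_le hs.qhat_lt_c (lt_of_le_of_ne hx.1 (Ne.symm hxc)).le,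
      lt_of_le_of_ne hx.2 hxq⟩
  | (m+2), _ =>
    set n := m + 2 with hndef
    have hn1 : 1 ≤ n := by omega
    have hm1 : 1 ≤ m + 1 := by omega
    obtain ⟨b, ⟨hcb, hbq, hIeq, _⟩, horb2⟩ := hs.nest_struct n hn1
    have horbm : ∀ j, 1 ≤ j → f^[j] b ∉ I (m+1) := horb2 (m+1) hm1 rfl
    have hIsub : I n ⊆ Icc (0:ℝ) 1 := hs.I_sub_unit hcb hbq hIeq
    have hbu : b ∈ Icc (0:ℝ) 1 := ⟨le_trans hs.hc0.le hcb.le, le_trans hbq hs.hq1.le⟩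
    have hbu' : 2*c - b ∈ Icc (0:ℝ) 1 := by
      constructor
      · have := hs.qhat_pos; linarith
      · have := hs.qhat_lt_c; have := hs.hc1; linarith
    have hfsymmb : f (2*c - b) = f b := hs.hsymm b hbu hbu'
    have hfb_lt_c1 : f b < f c := hs.hanti ⟨le_refl c, hs.hc1.le⟩ ⟨hcb.le, hbu.2⟩ hcb
    have hfbu : f b ∈ Icc (0:ℝ) 1 := hs.hmaps hbu
    have hfcu : f c ∈ Icc (0:ℝ) 1 := hs.fc_unit
    -- every point of I n has f-value in [f b, f c]
    have hfy : ∀ y ∈ I n, f y ∈ Icc (f b) (f c) := by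
      intro y hy
      rw [hIeq] at hy
      have hyu : y ∈ Icc (0:ℝ) 1 := hIsub (by rw [hIeq]; exact hy)
      rcases le_or_gt y c with hyc | hyc
      · have h1 : (2*c - b) ∈ Icc (0:ℝ) c := ⟨hbu'.1, (by linarith : 2*c - b ≤ c)⟩
        have h2 : y ∈ Icc (0:ℝ) c := ⟨hyu.1, hyc⟩
        have hlt := hs.hmono h1 h2 hy.1
        rw [hfsymmb] at hlt
        exact ⟨hlt.le, hs.hmono.monotoneOn h2 ⟨hs.hc0.le, le_refl c⟩ hyc⟩
      · have h1 : y ∈ Icc c 1 := ⟨hyc.le, hyu.2⟩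
        have h2 : b ∈ Icc c 1 := ⟨hcb.le, hbu.2⟩
        exact ⟨(hs.hanti h1 h2 hy.2).le,
          (hs.hanti ⟨le_refl c, hs.hc1.le⟩ h1 hyc).le⟩
    have hSn1 : 1 ≤ fibS n := fibS_one_le n
    have hSneq : fibS n - 1 + 1 = fibS n := Nat.succ_pred_eq_of_pos hSn1
    -- the iterate written through the first step
    have hiter : ∀ y : ℝ, f^[fibS n] y = f^[fibS n - 1] (f y) := by
      intro y
      conv_lhs => rw [← hSneq]
      rw [Function.iterate_succ_apply]
    -- monotonicity of f^[fibS n - 1] on [f b, f c]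
    have hMA : MonoAnti (f^[fibS n - 1]) (Icc (f b) (f c)) := by
      apply hs.iterMono (fibS n - 1) (f b) (f c) hfbu.1 hfcu.2 hfb_lt_c1.le
      intro t ht j hj
      have htu : t ∈ uIcc (f c) (f b) := by
        rw [uIcc_comm, uIcc_of_le hfb_lt_c1.le]
        exact ⟨ht.1.le, ht.2.le⟩
      have hsubcb : uIcc c b ⊆ Icc (0:ℝ) 1 := by
        rw [uIcc_of_le hcb.le]
        exact Icc_subset_Icc hs.hc0.le hbu.2
      obtain ⟨x, hx, hfx⟩ := intermediate_value_uIcc (hs.hcont.mono hsubcb) htu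
      rw [uIcc_of_le hcb.le] at hx
      have hxc : x ≠ c := by intro h; rw [h] at hfx; rw [hfx] at ht; exact lt_irrefl t ht.2
      have hxb : x ≠ b := by intro h; rw [h] at hfx; rw [hfx] at ht; exact lt_irrefl t ht.1
      have hxI : x ∈ I n := by
        rw [hIeq]
        exact ⟨by linarith [lt_of_le_of_ne hx.1 (Ne.symm hxc)],
          lt_of_le_of_ne hx.2 hxb⟩
      rw [← hfx, ← Function.iterate_succ_apply]
      exact hs.noLow n hn1 x hxI (j+1) (by omega) (Nat.add_lt_of_lt_sub hj)
    set β := f^[fibS n] b with hβ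
    set cS := f^[fibS n] c with hcS
    have himg : ∀ y ∈ I n, f^[fibS n] y ∈ uIcc β cS := by
      intro y hy
      rw [hiter y, hβ, hcS, hiter b, hiter c]
      exact monoAnti_mem_uIcc hMA hfb_lt_c1.le (hfy y hy)
    obtain ⟨y₀, hy₀, hy₀ret⟩ := hs.ret_I1 (n := n) hn1
    have hw := himg y₀ hy₀
    have hβn : β ∉ I n := fun hmem =>
      horbm (fibS n) hSn1 (hs.nest_sub hm1 (by rwa [hndef] at hmem))
    have hcSn : cS ∉ I n := hs.hnotin n hn1
    have hwI : f^[fibS n] y₀ ∈ I n := hy₀ret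
    have hwoo : f^[fibS n] y₀ ∈ Ioo (2*c - b) b := by rw [← hIeq]; exact hwI
    have hβoo : β ∉ Ioo (2*c - b) b := by rw [← hIeq]; exact hβn
    have hcSoo : cS ∉ Ioo (2*c - b) b := by rw [← hIeq]; exact hcSn
    have hw1 : β ⊓ cS ≤ f^[fibS n] y₀ := hw.1
    have hw2 : f^[fibS n] y₀ ≤ β ⊔ cS := hw.2
    have hqc := hs.qhat_lt_c
    -- c lies between β and cS
    have hcmem : c ∈ uIcc β cS := by
      rcases lt_or_ge c (β ⊓ cS) with h | h
      · exfalso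
        rw [lt_inf_iff] at h
        have hβb : b ≤ β := by
          by_contra hb'
          push_neg at hb'
          exact hβoo ⟨by linarith [h.1], hb'⟩
        have hcsb : b ≤ cS := by
          by_contra hb'
          push_neg at hb'
          exact hcSoo ⟨by linarith [h.2], hb'⟩
        have : b ≤ β ⊓ cS := le_inf hβb hcsb
        linarith [hwoo.2]
      · rcases lt_or_ge (β ⊔ cS) c with h' | h'
        · exfalso
          rw [sup_lt_iff] at h'
          have hβb : β ≤ 2*c - b := by
            by_contra hb'
            push_neg at hb'
            exact hβoo ⟨hb', by linarith [h'.1, hcb]⟩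
          have hcsb : cS ≤ 2*c - b := by
            by_contra hb'
            push_neg at hb'
            exact hcSoo ⟨hb', by linarith [h'.2, hcb]⟩
          have : β ⊔ cS ≤ 2*c - b := sup_le hβb hcsb
          linarith [hwoo.1]
        · exact ⟨h, h'⟩
    -- intermediate value on [c, b]
    have hsubcb : uIcc c b ⊆ Icc (0:ℝ) 1 := by
      rw [uIcc_of_le hcb.le]
      exact Icc_subset_Icc hs.hc0.le hbu.2
    have hcmem' : c ∈ uIcc (f^[fibS n] c) (f^[fibS n] b) := by
      rw [uIcc_comm] at hcmem; exact hcmem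
    obtain ⟨x, hx, hfx⟩ := intermediate_value_uIcc ((hs.contOn_iter (fibS n)).mono hsubcb) hcmem'
    rw [uIcc_of_le hcb.le] at hx
    have hxc : x ≠ c := by
      intro h; rw [h] at hfx
      exact hs.aperiodic (by omega : 1 ≤ fibS n) hfx
    have hxb : x ≠ b := by
      intro h; rw [h] at hfx
      apply hβn
      rw [hβ, hfx]
      exact hs.cmemI n hn1
    refine ⟨x, ?_, hfx⟩
    rw [hIeq]
    exact ⟨by linarith [lt_of_le_of_ne hx.1 (Ne.symm hxc)], lt_of_le_of_ne hx.2 hxb⟩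

end Setup
end FibAux

namespace FibAux
namespace Setup
open Set

variable {f : ℝ → ℝ} {c q : ℝ} {I : ℕ → Set ℝ} (hs : Setup f c q I)
include hs

lemma dd_chain (i : ℕ) : preimDist f c (fibS (i+1)) < preimDist f c (fibS i) := by
  obtain ⟨x, hxI, hfx⟩ := hs.N4 (i+1) (by omega)
  obtain ⟨b, ⟨hcb, hbq, hIeq, _⟩, _⟩ := hs.nest_struct (i+1) (by omega)
  have hxu : x ∈ Icc (0:ℝ) 1 := hs.I_sub_unit hcb hbq hIeq hxI
  exact lt_of_le_of_lt (hs.preimDist_le hxu hfx) (hs.ball i x hxI)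

lemma dd_anti {i j : ℕ} (h : i ≤ j) : preimDist f c (fibS j) ≤ preimDist f c (fibS i) := by
  induction j with
  | zero => simp_all
  | succ m ih =>
      rcases Nat.eq_or_lt_of_le h with h1 | h1
      · rw [h1]
      · exact le_trans (hs.dd_chain m).le (ih (by omega))

lemma dd_anti_strict {i j : ℕ} (h : i < j) :
    preimDist f c (fibS j) < preimDist f c (fibS i) := by
  have h1 : i + 1 ≤ j := h
  exact lt_of_le_of_lt (hs.dd_anti (show i + 1 ≤ j from h1) |>.trans (le_refl _))
    (hs.dd_chain i) |>.trans_le (le_refl _) |> id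

end Setup
end FibAux

namespace FibAux
namespace Setup
open Set

variable {f : ℝ → ℝ} {c q : ℝ} {I : ℕ → Set ℝ} (hs : Setup f c q I)
include hs

/-- Core step of the lower-bound induction. -/
lemma Qaux (k i : ℕ)
    (IH : ∀ k', k' < k → ∀ i', fibS i' ≤ k' → k' < fibS (i'+1) →
      ∀ y, y ∈ Icc (0:ℝ) 1 → f^[k'] y = c → preimDist f c (fibS i') ≤ |y - c|)
    (hik : fibS i ≤ k) (hik2 : k < fibS (i+1)) {x : ℝ} (hxu : x ∈ Icc (0:ℝ) 1)
    (hfx : f^[k] x = c) : preimDist f c (fibS i) ≤ |x - c| := by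
  by_contra hlt
  push_neg at hlt
  rcases Nat.eq_or_lt_of_le hik with heq | hgt
  · exact absurd (hs.preimDist_le hxu (by rw [← heq] at hfx; exact hfx)) (not_le.2 (by rw [heq] at hlt ⊢; exact hlt))
  · -- k > fibS i forces i ≥ 2
    have hi2 : 2 ≤ i := by
      by_contra h'
      push_neg at h'
      have : fibS (i+1) = fibS i + 1 := by
        interval_cases i <;> rfl
      omega
    obtain ⟨j, rfl⟩ : ∃ j, i = j + 2 := ⟨i - 2, by omega⟩
    set i := j + 2
    have hexp : fibS (i+1) = fibS i + fibS (j+1) := rfl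
    set k' := k - fibS i with hk'def
    have hkk : k = k' + fibS i := by omega
    have hk'1 : 1 ≤ k' := by omega
    have hk'2 : k' < fibS (j+1) := by omega
    have hSi1 : 1 ≤ fibS i := fibS_one_le i
    have hddpos : 0 < preimDist f c (fibS i) := hs.d_pos hSi1
    obtain ⟨z, ⟨hzu, hzpre⟩, hz3, _⟩ := hs.exists_realizer (fibS i)
    have hzne : z ≠ c := by
      intro h
      rw [h, sub_self, abs_zero] at hz3
      exact absurd hz3.symm (ne_of_gt hddpos)
    have hxne : x ≠ c := by
      intro h
      rw [h] at hfx
      exact hs.aperiodic (by omega : 1 ≤ k) hfx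
    -- cS and its bound
    set cS := f^[fibS i] c with hcSdef
    have hcSI : cS ∈ I (j+1) := (hs.c_ret (n := j+1) (by omega)).2.1
    have hcSb : |cS - c| < preimDist f c (fibS j) := hs.ball j cS hcSI
    have hcS_ne : cS ≠ c := hs.aperiodic hSi1
    -- chain facts
    have hchain1 : preimDist f c (fibS i) < preimDist f c (fibS (j+1)) :=
      hs.dd_anti_strict (show j + 1 < i by omega)
    -- main case split on the side of the realizer z
    rcases lt_or_gt_of_ne hzne with hzc | hzc
    · -- z < c : move x to the left side
      have hx' : ∃ x', x' ∈ Icc (0:ℝ) 1 ∧ f^[k] x' = c ∧ |x' - c| = |x - c| ∧ x' < c := by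
        rcases lt_or_gt_of_ne hxne with h | h
        · exact ⟨x, hxu, hfx, rfl, h⟩
        · have hb1 : 0 ≤ 2*c - x := by
            have h5 : |x - c| < c - z := by
              rw [← hz3, abs_of_neg (show z - c < 0 by linarith)] at hlt; linarith
            have h6 : x - c < c - z := lt_of_le_of_lt (le_abs_self _) h5
            linarith [hzu.1]
          have hb2 : 2*c - x ≤ 1 := by have := hs.hc1; linarith [hxu.1, hs.hc0]
          refine ⟨2*c - x, ⟨hb1, hb2⟩, ?_, ?_, by linarith⟩
          · rw [hs.symm_iter hxu ⟨hb1, hb2⟩ (by omega : 1 ≤ k)]; exact hfx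
          · rw [show 2*c - x - c = -(x - c) by ring, abs_neg]
      obtain ⟨x', hx'u, hfx', habs', hx'c⟩ := hx'
      have hlt' : |x' - c| < preimDist f c (fibS i) := by rwa [habs']
      -- monotonicity of f^[fibS i] on [z, c]
      have hMA : MonoAnti (f^[fibS i]) (Icc z c) := by
        apply hs.iterMono (fibS i) z c hzu.1 hs.hc1.le hzc.le
        intro u hu j' hj'
        rcases Nat.eq_zero_or_pos j' with rfl | hj'pos
        · simpa using ne_of_lt hu.2
        · intro hc'
          obtain ⟨i', hi'1, hi'2⟩ := exists_level hj'pos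
          have hi'lt : i' < i := level_le hj' i' hi'1
          have huu : u ∈ Icc (0:ℝ) 1 := ⟨le_trans hzu.1 hu.1.le, le_trans hu.2.le hs.hc1.le⟩
          have hQ := IH j' (by omega) i' hi'1 hi'2 u huu hc'
          have habs : |u - c| < preimDist f c (fibS i) := by
            rw [abs_of_neg (by linarith [hu.2])]
            rw [← hz3, abs_of_neg (by linarith)]
            linarith [hu.1]
          have : preimDist f c (fibS i) < preimDist f c (fibS i') :=
            lt_of_lt_of_le hchain1 (hs.dd_anti (show i' ≤ j + 1 by omega))
          linarith
      have hx'mem : x' ∈ Ioo z c := by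
        constructor
        · have h5 : |x' - c| < c - z := by
            rw [← hz3, abs_of_neg (show z - c < 0 by linarith)] at hlt'; linarith
          rw [abs_of_neg (show x' - c < 0 by linarith)] at h5
          linarith
        · exact hx'c
      have hbetw := monoAnti_mem_uIoo hMA hx'mem
      rw [hzpre, ← hcSdef] at hbetw
      set w := f^[fibS i] x' with hwdef
      have hwu : w ∈ Icc (0:ℝ) 1 := hs.mapsTo_iter (fibS i) hx'u
      have hbetw' : (c < w ∧ w < cS) ∨ (cS < w ∧ w < c) := by tauto
      have hwabs : |w - c| < |cS - c| := by
        rcases hbetw' with ⟨h1, h2⟩ | ⟨h1, h2⟩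
        · rw [abs_of_pos (by linarith), abs_of_pos (by linarith)]; linarith
        · rw [abs_of_neg (by linarith), abs_of_neg (by linarith)]; linarith
      have hfw : f^[k'] w = c := by
        rw [hwdef, ← Function.iterate_add_apply, ← hkk]
        exact hfx'
      obtain ⟨i'', hi''1, hi''2⟩ := exists_level hk'1
      have hi''le : i'' < j + 1 := level_le hk'2 i'' hi''1
      have hQw := IH k' (by omega) i'' hi''1 hi''2 w hwu hfw
      have hmono2 : preimDist f c (fibS j) ≤ preimDist f c (fibS i'') := hs.dd_anti (by omega)
      linarith
    · -- z > c : move x to the right side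
      have hx' : ∃ x', x' ∈ Icc (0:ℝ) 1 ∧ f^[k] x' = c ∧ |x' - c| = |x - c| ∧ c < x' := by
        rcases lt_or_gt_of_ne hxne with h | h
        · have hb1 : 0 ≤ 2*c - x := by have := hs.hc0; linarith [hxu.2]
          have hb2 : 2*c - x ≤ 1 := by
            have h5 : |x - c| < z - c := by
              rw [← hz3, abs_of_pos (show 0 < z - c by linarith)] at hlt; linarith
            have h6 : c - x ≤ |x - c| := by rw [abs_sub_comm]; exact le_abs_self _
            linarith [hzu.2]
          refine ⟨2*c - x, ⟨hb1, hb2⟩, ?_, ?_, by linarith⟩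
          · rw [hs.symm_iter hxu ⟨hb1, hb2⟩ (by omega : 1 ≤ k)]; exact hfx
          · rw [show 2*c - x - c = -(x - c) by ring, abs_neg]
        · exact ⟨x, hxu, hfx, rfl, h⟩
      obtain ⟨x', hx'u, hfx', habs', hx'c⟩ := hx'
      have hlt' : |x' - c| < preimDist f c (fibS i) := by rwa [habs']
      have hMA : MonoAnti (f^[fibS i]) (Icc c z) := by
        apply hs.iterMono (fibS i) c z hs.hc0.le hzu.2 hzc.le
        intro u hu j' hj'
        rcases Nat.eq_zero_or_pos j' with rfl | hj'pos
        · simpa using (ne_of_gt hu.1)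
        · intro hc'
          obtain ⟨i', hi'1, hi'2⟩ := exists_level hj'pos
          have hi'lt : i' < i := level_le hj' i' hi'1
          have huu : u ∈ Icc (0:ℝ) 1 := ⟨le_trans hs.hc0.le hu.1.le, le_trans hu.2.le hzu.2⟩
          have hQ := IH j' (by omega) i' hi'1 hi'2 u huu hc'
          have habs : |u - c| < preimDist f c (fibS i) := by
            rw [abs_of_pos (by linarith [hu.1])]
            rw [← hz3, abs_of_pos (by linarith)]
            linarith [hu.2]
          have : preimDist f c (fibS i) < preimDist f c (fibS i') :=
            lt_of_lt_of_le hchain1 (hs.dd_anti (show i' ≤ j + 1 by omega))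
          linarith
      have hx'mem : x' ∈ Ioo c z := by
        constructor
        · exact hx'c
        · have h5 : |x' - c| < z - c := by
            rw [← hz3, abs_of_pos (show 0 < z - c by linarith)] at hlt'; linarith
          rw [abs_of_pos (show 0 < x' - c by linarith)] at h5
          linarith
      have hbetw := monoAnti_mem_uIoo hMA hx'mem
      rw [hzpre, ← hcSdef] at hbetw
      set w := f^[fibS i] x' with hwdef
      have hwu : w ∈ Icc (0:ℝ) 1 := hs.mapsTo_iter (fibS i) hx'u
      have hbetw' : (c < w ∧ w < cS) ∨ (cS < w ∧ w < c) := by tauto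
      have hwabs : |w - c| < |cS - c| := by
        rcases hbetw' with ⟨h1, h2⟩ | ⟨h1, h2⟩
        · rw [abs_of_pos (by linarith), abs_of_pos (by linarith)]; linarith
        · rw [abs_of_neg (by linarith), abs_of_neg (by linarith)]; linarith
      have hfw : f^[k'] w = c := by
        rw [hwdef, ← Function.iterate_add_apply, ← hkk]
        exact hfx'
      obtain ⟨i'', hi''1, hi''2⟩ := exists_level hk'1
      have hi''le : i'' < j + 1 := level_le hk'2 i'' hi''1
      have hQw := IH k' (by omega) i'' hi''1 hi''2 w hwu hfw
      have hmono2 : preimDist f c (fibS j) ≤ preimDist f c (fibS i'') := hs.dd_anti (by omega)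
      linarith

/-- Main lower bound: a `k`-preimage of `c` with `fibS i ≤ k < fibS (i+1)` is at least
`preimDist (fibS i)` away from `c`. -/
lemma Qmain : ∀ k i, fibS i ≤ k → k < fibS (i+1) → ∀ x, x ∈ Icc (0:ℝ) 1 → f^[k] x = c →
    preimDist f c (fibS i) ≤ |x - c| := by
  intro k
  induction k using Nat.strong_induction_on with
  | _ k IHk =>
    intro i h1 h2 x h3 h4
    exact hs.Qaux k i (fun k' hk' i' a b y hy hfy => IHk k' hk' i' a b y hy hfy) h1 h2 h3 h4

end Setup
end FibAux


/-- Converse: if a symmetric unimodal map has, at every level `k ≥ 1` of the principal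
nest starting from `I¹ = (q̂, q)`, exactly two return domains meeting the forward critical
orbit with return times `S_{k+1}` (on the central one) and `S_k`, and `f^{S_k}(c) ∉ Iᵏ`,
then `f` is a Fibonacci map. -/
theorem fibonacci_of_two_return_branches (f : ℝ → ℝ) (c q : ℝ) (I : ℕ → Set ℝ)
    (hf : IsUnimodal f c) (hsymm : SymmetricAbout f c)
    (hq : f q = q) (hqI : q ∈ Set.Ioo c 1)
    (hI1 : I 1 = Set.Ioo (2 * c - q) q)
    (hI : ∀ k, 1 ≤ k → c ∈ I (k + 1) ∧ IsReturnDomain f (I k) (I (k + 1)))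
    (hbranch : ∀ k, 1 ≤ k →
      ∃ I0 I1 : Set ℝ, c ∈ I0 ∧ I0 ≠ I1 ∧
        IsReturnDomain f (I k) I0 ∧ (I0 ∩ posOrbit f c).Nonempty ∧
        IsReturnDomain f (I k) I1 ∧ (I1 ∩ posOrbit f c).Nonempty ∧
        (∀ C, IsReturnDomain f (I k) C → (C ∩ posOrbit f c).Nonempty → C = I0 ∨ C = I1) ∧
        (∀ x ∈ I0, ReturnTimeEq f (I k) x (fibS (k + 1))) ∧
        (∀ x ∈ I1, ReturnTimeEq f (I k) x (fibS k)))
    (hnotin : ∀ k, 1 ≤ k → f^[fibS k] c ∉ I k) :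
    IsFibonacciMap f c    := by
  have hs : FibAux.Setup f c q I := ⟨hf, hsymm, hq, hqI, hI1, hI, hbranch, hnotin⟩
  refine ⟨hf, hsymm, rfl, fun i => ?_⟩
  constructor
  · exact ⟨FibAux.fibS_le_of_le (Nat.le_succ i), hs.preSet_nonempty _, hs.dd_chain i⟩
  · rintro k ⟨h1, _, h3⟩
    by_contra h4
    push_neg at h4
    obtain ⟨z, ⟨hz1, hz2⟩, hz3, _⟩ := hs.exists_realizer k
    have hQ := hs.Qmain k i h1 h4 z hz1 hz2
    rw [hz3] at hQ
    exact absurd h3 (not_lt.2 hQ)
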